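/- Assuming the worst finite optimal value f̄_fin of the interval transportation problem is attained at some quasi-extreme scenario (Theorem of Garajová–Rada / Carrabs et al.), and that there exists at least one infeasible scenario (sum_i s̲_i < sum_j d̄_j), the value f̄_fin is attained at a balanced quasi-extreme scenario, i.e., f̄_fin = max over all balanced feasible quasi-extreme scenarios (C̄, s, d) of f(C̄, s, d). -/
import Mathlib


open Finset

/-- A feasible transportation plan for supplies `s` and demands `d`. -/
def IsPlan {m n : ℕ} (s : Fin m → ℝ) (d : Fin n → ℝ) (x : Fin m → Fin n → ℝ) : Prop :=
  (∀ i j, 0 ≤ x i j) ∧ (∀ i, ∑ j, x i j ≤ s i) ∧ (∀ j, ∑ i, x i j = d j)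

/-- Total transportation cost of a plan `x` under cost matrix `C`. -/
def cost {m n : ℕ} (C x : Fin m → Fin n → ℝ) : ℝ :=
  ∑ i, ∑ j, C i j * x i j

/-- Optimal value of the transportation problem with data `(C, s, d)`. -/
noncomputable def optVal {m n : ℕ} (C : Fin m → Fin n → ℝ) (s : Fin m → ℝ)
    (d : Fin n → ℝ) : ℝ :=
  sInf (cost C '' {x | IsPlan s d x})

/-- A supply-demand vector is quasi-extreme if all its coordinates except at most
one (a supply coordinate, or a demand coordinate) lie at the interval endpoints. -/
def QuasiExtreme {m n : ℕ} (sl su s : Fin m → ℝ) (dl du : Fin n → ℝ)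
    (d : Fin n → ℝ) : Prop :=
  (∃ k : Fin m, (∀ i, i ≠ k → s i = sl i ∨ s i = su i) ∧
      (∀ j, d j = dl j ∨ d j = du j)) ∨
  (∃ k : Fin n, (∀ j, j ≠ k → d j = dl j ∨ d j = du j) ∧
      (∀ i, s i = sl i ∨ s i = su i))

lemma plan_exists {m n : ℕ} (s : Fin m → ℝ) (d : Fin n → ℝ)
    (hs : ∀ i, 0 ≤ s i) (hd : ∀ j, 0 ≤ d j) (h : ∑ j, d j ≤ ∑ i, s i) :
    ∃ x, IsPlan s d x := by
  by_cases hS : ∑ i, s i = 0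
  · refine ⟨fun _ _ => 0, fun _ _ => le_refl 0, fun i => ?_, fun j => ?_⟩
    · simpa using hs i
    · have hsum : ∑ j, d j = 0 :=
        le_antisymm (hS ▸ h) (Finset.sum_nonneg fun j _ => hd j)
      have := (Finset.sum_eq_zero_iff_of_nonneg (fun j _ => hd j)).1 hsum j (mem_univ j)
      simp [this]
  · have hSpos : 0 < ∑ i, s i :=
      lt_of_le_of_ne (Finset.sum_nonneg fun i _ => hs i) (Ne.symm hS)
    refine ⟨fun i j => s i * d j / ∑ i, s i,
      fun i j => div_nonneg (mul_nonneg (hs i) (hd j)) hSpos.le, fun i => ?_, fun j => ?_⟩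
    · rw [← Finset.sum_div, ← Finset.mul_sum, div_le_iff₀ hSpos]
      exact mul_le_mul_of_nonneg_left h (hs i)
    · rw [← Finset.sum_div, ← Finset.sum_mul, mul_comm, mul_div_assoc,
        div_self hS, mul_one]

lemma cost_nonneg {m n : ℕ} (C x : Fin m → Fin n → ℝ) (hC : ∀ i j, 0 ≤ C i j)
    (hx : ∀ i j, 0 ≤ x i j) : 0 ≤ cost C x :=
  Finset.sum_nonneg fun i _ => Finset.sum_nonneg fun j _ => mul_nonneg (hC i j) (hx i j)

lemma bdd_below_costs {m n : ℕ} (C : Fin m → Fin n → ℝ) (s : Fin m → ℝ) (d : Fin n → ℝ)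
    (hC : ∀ i j, 0 ≤ C i j) : BddBelow (cost C '' {x | IsPlan s d x}) := by
  refine ⟨0, ?_⟩
  rintro v ⟨x, hx, rfl⟩
  exact cost_nonneg C x hC hx.1

lemma optVal_mono_supply {m n : ℕ} (C : Fin m → Fin n → ℝ) (s' s : Fin m → ℝ)
    (d : Fin n → ℝ) (hC : ∀ i j, 0 ≤ C i j) (h : ∀ i, s' i ≤ s i)
    (hne : ∃ x, IsPlan s' d x) : optVal C s d ≤ optVal C s' d := by
  apply csInf_le_csInf (bdd_below_costs C s d hC)
  · obtain ⟨x, hx⟩ := hne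
    exact ⟨cost C x, ⟨x, hx, rfl⟩⟩
  · apply Set.image_mono
    rintro x ⟨h1, h2, h3⟩
    exact ⟨h1, fun i => (h2 i).trans (h i), h3⟩

lemma optVal_mono_demand {m n : ℕ} (C : Fin m → Fin n → ℝ) (s : Fin m → ℝ)
    (d d' : Fin n → ℝ) (hC : ∀ i j, 0 ≤ C i j) (hd : ∀ j, 0 ≤ d j)
    (h : ∀ j, d j ≤ d' j) (hne : ∃ x, IsPlan s d' x) :
    optVal C s d ≤ optVal C s d' := by
  apply le_csInf
  · obtain ⟨x, hx⟩ := hne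
    exact ⟨cost C x, ⟨x, hx, rfl⟩⟩
  rintro v ⟨x', hx', rfl⟩
  set x : Fin m → Fin n → ℝ :=
    fun i j => if d' j = 0 then 0 else x' i j * (d j / d' j) with hxdef
  have hd'pos : ∀ j, d' j ≠ 0 → 0 < d' j := fun j hj =>
    lt_of_le_of_ne (le_trans (hd j) (h j)) (Ne.symm hj)
  have hratio : ∀ j, d' j ≠ 0 → 0 ≤ d j / d' j ∧ d j / d' j ≤ 1 := by
    intro j hj
    constructor
    · exact div_nonneg (hd j) (le_trans (hd j) (h j))
    · rw [div_le_one (hd'pos j hj)]; exact h j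
  have hxle : ∀ i j, x i j ≤ x' i j := by
    intro i j
    simp only [hxdef]
    split_ifs with hj
    · exact hx'.1 i j
    · calc x' i j * (d j / d' j) ≤ x' i j * 1 :=
            mul_le_mul_of_nonneg_left (hratio j hj).2 (hx'.1 i j)
        _ = x' i j := mul_one _
  have hxnn : ∀ i j, 0 ≤ x i j := by
    intro i j
    simp only [hxdef]
    split_ifs with hj
    · exact le_refl 0
    · exact mul_nonneg (hx'.1 i j) (hratio j hj).1
  have hplan : IsPlan s d x := by
    refine ⟨hxnn, fun i => ?_, fun j => ?_⟩
    · exact le_trans (Finset.sum_le_sum fun j _ => hxle i j) (hx'.2.1 i)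
    · by_cases hj : d' j = 0
      · have hdj : d j = 0 := le_antisymm (hj ▸ h j) (hd j)
        simp [hxdef, hj, hdj]
      · simp only [hxdef, if_neg hj]
        rw [← Finset.sum_mul, hx'.2.2 j, mul_div_assoc']
        field_simp
  have h1 : optVal C s d ≤ cost C x :=
    csInf_le (bdd_below_costs C s d hC) ⟨x, hplan, rfl⟩
  refine h1.trans ?_
  exact Finset.sum_le_sum fun i _ => Finset.sum_le_sum fun j _ =>
    mul_le_mul_of_nonneg_left (hxle i j) (hC i j)

lemma sum_update_real {N : ℕ} (f : Fin N → ℝ) (k : Fin N) (v : ℝ) :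
    ∑ i, Function.update f k v i = ∑ i, f i - f k + v := by
  rw [Finset.sum_update_of_mem (mem_univ k),
    Finset.sum_sdiff_eq_sub (Finset.singleton_subset_iff.2 (mem_univ k)),
    Finset.sum_singleton]
  ring

lemma greedy {N : ℕ} (hN : 0 < N) (a b : Fin N → ℝ) (hab : ∀ i, a i ≤ b i)
    (t : ℝ) (h1 : ∑ i, a i ≤ t) (h2 : t ≤ ∑ i, b i) :
    ∃ c : Fin N → ℝ, (∀ i, a i ≤ c i ∧ c i ≤ b i) ∧ (∑ i, c i = t) ∧
      ∃ k : Fin N, ∀ i, i ≠ k → c i = a i ∨ c i = b i := by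
  set r : ℝ := t - ∑ i, a i with hrdef
  have hr0 : 0 ≤ r := by simp only [hrdef]; linarith
  set g : ℕ → ℝ := fun j => if h : j < N then b ⟨j, h⟩ - a ⟨j, h⟩ else 0 with hgdef
  have hg0 : ∀ j, 0 ≤ g j := by
    intro j
    simp only [hgdef]
    split_ifs with h
    · linarith [hab ⟨j, h⟩]
    · exact le_refl 0
  set G : ℕ → ℝ := fun j => ∑ i ∈ Finset.range j, g i with hGdef
  have hGsucc : ∀ j, G (j + 1) = G j + g j := fun j => Finset.sum_range_succ g j
  have hGmono : Monotone G := by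
    intro j j' hjj
    exact Finset.sum_le_sum_of_subset_of_nonneg (Finset.range_subset_range.2 hjj)
      (fun i _ _ => hg0 i)
  have hG0 : G 0 = 0 := Finset.sum_range_zero g
  have hgval : ∀ i : Fin N, g i.val = b i - a i := by
    intro i
    simp only [hgdef, dif_pos i.isLt]
  have hGN : r ≤ G N := by
    have e : ∑ i : Fin N, g i.val = G N := Fin.sum_univ_eq_sum_range g N
    have e2 : G N = ∑ i : Fin N, (b i - a i) := by
      rw [← e]; exact Finset.sum_congr rfl fun i _ => hgval i
    rw [e2, Finset.sum_sub_distrib]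
    simp only [hrdef]
    linarith
  set c : Fin N → ℝ := fun i => a i + (min r (G (i.val + 1)) - min r (G i.val)) with hcdef
  have hbounds : ∀ i, a i ≤ c i ∧ c i ≤ b i := by
    intro i
    have h1' : min r (G i.val) ≤ min r (G (i.val + 1)) :=
      min_le_min (le_refl r) (hGmono (Nat.le_succ _))
    have h2' : min r (G (i.val + 1)) ≤ min r (G i.val) + g i.val := by
      rcases le_total r (G i.val) with h | h
      · rw [min_eq_left h, min_eq_left (h.trans (hGmono (Nat.le_succ _)))]
        linarith [hg0 i.val]
      · rw [min_eq_right h]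
        calc min r (G (i.val + 1)) ≤ G (i.val + 1) := min_le_right _ _
          _ = G i.val + g i.val := hGsucc _
    constructor
    · simp only [hcdef]; linarith
    · simp only [hcdef]
      have := hgval i
      linarith
  refine ⟨c, hbounds, ?_, ?_⟩
  · have : ∑ i : Fin N, (min r (G (i.val + 1)) - min r (G i.val)) = r := by
      rw [Fin.sum_univ_eq_sum_range (fun j => min r (G (j + 1)) - min r (G j)) N,
        Finset.sum_range_sub (fun j => min r (G j)) N, hG0,
        min_eq_right hr0, min_eq_left hGN]
      ring
    simp only [hcdef]
    rw [Finset.sum_add_distrib, this]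
    simp only [hrdef]
    ring
  · have hkey : ∀ i : Fin N, ¬ (G i.val < r ∧ r < G (i.val + 1)) →
        c i = a i ∨ c i = b i := by
      intro i hi
      push_neg at hi
      rcases lt_or_ge (G i.val) r with h | h
      · right
        have h' : G (i.val + 1) ≤ r := hi h
        simp only [hcdef]
        rw [min_eq_right h', min_eq_right h.le]
        have e1 := hGsucc i.val
        have e2 := hgval i
        linarith
      · left
        simp only [hcdef]
        rw [min_eq_left h, min_eq_left (h.trans (hGmono (Nat.le_succ _)))]
        ring
    by_cases hex : ∃ i : Fin N, G i.val < r ∧ r < G (i.val + 1)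
    · obtain ⟨k, hk⟩ := hex
      refine ⟨k, fun i hi => hkey i ?_⟩
      rintro ⟨hi1, hi2⟩
      have hvalne : i.val ≠ k.val := fun h => hi (Fin.ext h)
      rcases lt_or_gt_of_ne hvalne with h | h
      · have : G (i.val + 1) ≤ G k.val := hGmono h
        linarith [hk.1]
      · have : G (k.val + 1) ≤ G i.val := hGmono h
        linarith [hk.2]
    · exact ⟨⟨0, hN⟩, fun i _ => hkey i (fun hc => hex ⟨i, hc⟩)⟩

lemma balance_endpoints {m n : ℕ} (sl su : Fin m → ℝ) (dl du : Fin n → ℝ)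
    (s : Fin m → ℝ) (d : Fin n → ℝ)
    (hsb : ∀ i, sl i ≤ s i ∧ s i ≤ su i) (hdb : ∀ j, dl j ≤ d j ∧ d j ≤ du j)
    (hse : ∀ i, s i = sl i ∨ s i = su i) (hde : ∀ j, d j = dl j ∨ d j = du j)
    (hsl0 : ∀ i, 0 ≤ sl i) (hdl0 : ∀ j, 0 ≤ dl j)
    (hinfeas : ∑ i, sl i < ∑ j, du j)
    (hfeas : ∑ j, d j ≤ ∑ i, s i) :
    ∃ s₂ d₂, (∀ i, sl i ≤ s₂ i ∧ s₂ i ≤ s i) ∧ (∀ j, d j ≤ d₂ j ∧ d₂ j ≤ du j) ∧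
      QuasiExtreme sl su s₂ dl du d₂ ∧ ∑ i, s₂ i = ∑ j, d₂ j := by
  have hn : 0 < n := by
    rcases Nat.eq_zero_or_pos n with h | h
    · subst h
      simp only [Finset.univ_eq_empty, Finset.sum_empty] at hinfeas
      linarith [Finset.sum_nonneg fun i (_ : i ∈ univ) => hsl0 i]
    · exact h
  rcases eq_or_lt_of_le hfeas with heq | hlt
  · refine ⟨s, d, fun i => ⟨(hsb i).1, le_refl _⟩, fun j => ⟨le_refl _, (hdb j).2⟩,
      ?_, heq.symm⟩
    exact Or.inr ⟨⟨0, hn⟩, fun j _ => hde j, hse⟩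
  rcases le_or_gt (∑ i, sl i) (∑ j, d j) with hcase | hcase
  · have hm : 0 < m := by
      rcases Nat.eq_zero_or_pos m with h | h
      · subst h
        simp only [Finset.univ_eq_empty, Finset.sum_empty] at hlt
        linarith [Finset.sum_nonneg fun j (_ : j ∈ univ) => (hdl0 j).trans (hdb j).1]
      · exact h
    obtain ⟨c, hcb, hcsum, k, hk⟩ :=
      greedy hm sl s (fun i => (hsb i).1) (∑ j, d j) hcase hlt.le
    refine ⟨c, d, hcb, fun j => ⟨le_refl _, (hdb j).2⟩, ?_, hcsum⟩
    left
    refine ⟨k, fun i hi => ?_, hde⟩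
    rcases hk i hi with h | h
    · exact Or.inl h
    · rcases hse i with h' | h'
      · exact Or.inl (h.trans h')
      · exact Or.inr (h.trans h')
  · obtain ⟨c, hcb, hcsum, k, hk⟩ :=
      greedy hn d du (fun j => (hdb j).2) (∑ i, sl i) hcase.le hinfeas.le
    refine ⟨sl, c, fun i => ⟨le_refl _, (hsb i).1⟩, hcb, ?_, hcsum.symm⟩
    right
    refine ⟨k, fun j hj => ?_, fun i => Or.inl rfl⟩
    rcases hk j hj with h | h
    · rcases hde j with h' | h'
      · exact Or.inl (h.trans h')
      · exact Or.inr (h.trans h')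
    · exact Or.inr h

/-- If the worst finite optimal value is attained at a quasi-extreme scenario with
cost matrix C̄, and there exists an infeasible scenario, then it is attained at a
balanced quasi-extreme scenario. -/
theorem worst_value_balanced_quasi_extreme {m n : ℕ} (Cl Cu : Fin m → Fin n → ℝ)
    (sl su : Fin m → ℝ) (dl du : Fin n → ℝ)
    (hCl : ∀ i j, 0 ≤ Cl i j) (hC : ∀ i j, Cl i j ≤ Cu i j)
    (hsl : ∀ i, 0 ≤ sl i) (hslsu : ∀ i, sl i ≤ su i)
    (hdl : ∀ j, 0 ≤ dl j) (hdldu : ∀ j, dl j ≤ du j)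
    (hinfeas : ∑ i, sl i < ∑ j, du j)
    (hattain : ∃ (s : Fin m → ℝ) (d : Fin n → ℝ),
      (∀ i, sl i ≤ s i ∧ s i ≤ su i) ∧ (∀ j, dl j ≤ d j ∧ d j ≤ du j) ∧
      QuasiExtreme sl su s dl du d ∧ ∑ j, d j ≤ ∑ i, s i ∧
      IsGreatest {v | ∃ (C : Fin m → Fin n → ℝ) (s' : Fin m → ℝ) (d' : Fin n → ℝ),
          (∀ i j, Cl i j ≤ C i j ∧ C i j ≤ Cu i j) ∧
          (∀ i, sl i ≤ s' i ∧ s' i ≤ su i) ∧ (∀ j, dl j ≤ d' j ∧ d' j ≤ du j) ∧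
          ∑ j, d' j ≤ ∑ i, s' i ∧ v = optVal C s' d'} (optVal Cu s d)) :
    ∃ (s : Fin m → ℝ) (d : Fin n → ℝ),
      (∀ i, sl i ≤ s i ∧ s i ≤ su i) ∧ (∀ j, dl j ≤ d j ∧ d j ≤ du j) ∧
      QuasiExtreme sl su s dl du d ∧ ∑ i, s i = ∑ j, d j ∧
      IsGreatest {v | ∃ (C : Fin m → Fin n → ℝ) (s' : Fin m → ℝ) (d' : Fin n → ℝ),
          (∀ i j, Cl i j ≤ C i j ∧ C i j ≤ Cu i j) ∧
          (∀ i, sl i ≤ s' i ∧ s' i ≤ su i) ∧ (∀ j, dl j ≤ d' j ∧ d' j ≤ du j) ∧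
          ∑ j, d' j ≤ ∑ i, s' i ∧ v = optVal C s' d'} (optVal Cu s d) := by
  classical
  obtain ⟨s, d, hsb, hdb, hQE, hfeas, hG⟩ := hattain
  have hCu0 : ∀ i j, 0 ≤ Cu i j := fun i j => (hCl i j).trans (hC i j)
  have hs0 : ∀ i, 0 ≤ s i := fun i => (hsl i).trans (hsb i).1
  have hd0 : ∀ j, 0 ≤ d j := fun j => (hdl j).trans (hdb j).1
  have key : ∀ s₂ d₂ : _, (∀ i, sl i ≤ s₂ i ∧ s₂ i ≤ s i) →
      (∀ j, d j ≤ d₂ j ∧ d₂ j ≤ du j) →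
      QuasiExtreme sl su s₂ dl du d₂ → ∑ i, s₂ i = ∑ j, d₂ j →
      ∃ (s : Fin m → ℝ) (d : Fin n → ℝ),
        (∀ i, sl i ≤ s i ∧ s i ≤ su i) ∧ (∀ j, dl j ≤ d j ∧ d j ≤ du j) ∧
        QuasiExtreme sl su s dl du d ∧ ∑ i, s i = ∑ j, d j ∧
        IsGreatest {v | ∃ (C : Fin m → Fin n → ℝ) (s' : Fin m → ℝ) (d' : Fin n → ℝ),
            (∀ i j, Cl i j ≤ C i j ∧ C i j ≤ Cu i j) ∧
            (∀ i, sl i ≤ s' i ∧ s' i ≤ su i) ∧ (∀ j, dl j ≤ d' j ∧ d' j ≤ du j) ∧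
            ∑ j, d' j ≤ ∑ i, s' i ∧ v = optVal C s' d'} (optVal Cu s d) := by
    intro s₂ d₂ hs₂ hd₂ hQE₂ hbal₂
    have hs₂b : ∀ i, sl i ≤ s₂ i ∧ s₂ i ≤ su i :=
      fun i => ⟨(hs₂ i).1, (hs₂ i).2.trans (hsb i).2⟩
    have hd₂b : ∀ j, dl j ≤ d₂ j ∧ d₂ j ≤ du j :=
      fun j => ⟨(hdb j).1.trans (hd₂ j).1, (hd₂ j).2⟩
    have hs₂0 : ∀ i, 0 ≤ s₂ i := fun i => (hsl i).trans (hs₂ i).1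
    have hd₂0 : ∀ j, 0 ≤ d₂ j := fun j => (hd0 j).trans (hd₂ j).1
    have hplan₂ : ∃ x, IsPlan s₂ d₂ x := plan_exists s₂ d₂ hs₂0 hd₂0 hbal₂.ge
    have hplan₁ : ∃ x, IsPlan s d₂ x := by
      apply plan_exists s d₂ hs0 hd₂0
      calc ∑ j, d₂ j = ∑ i, s₂ i := hbal₂.symm
        _ ≤ ∑ i, s i := Finset.sum_le_sum fun i _ => (hs₂ i).2
    have hle1 : optVal Cu s d ≤ optVal Cu s d₂ :=
      optVal_mono_demand Cu s d d₂ hCu0 hd0 (fun j => (hd₂ j).1) hplan₁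
    have hle2 : optVal Cu s d₂ ≤ optVal Cu s₂ d₂ :=
      optVal_mono_supply Cu s₂ s d₂ hCu0 (fun i => (hs₂ i).2) hplan₂
    have hle3 : optVal Cu s₂ d₂ ≤ optVal Cu s d :=
      hG.2 ⟨Cu, s₂, d₂, fun i j => ⟨hC i j, le_refl _⟩, hs₂b, hd₂b, hbal₂.ge, rfl⟩
    have heq : optVal Cu s₂ d₂ = optVal Cu s d :=
      le_antisymm hle3 (hle1.trans hle2)
    refine ⟨s₂, d₂, hs₂b, hd₂b, hQE₂, hbal₂, ?_⟩
    rw [heq]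
    exact hG
  rcases eq_or_lt_of_le hfeas with hbal | hlt
  · exact key s d (fun i => ⟨(hsb i).1, le_refl _⟩) (fun j => ⟨le_refl _, (hdb j).2⟩)
      hQE hbal.symm
  rcases hQE with ⟨k, hks, hkd⟩ | ⟨k, hkd, hks⟩
  · -- free supply coordinate k, all demands at endpoints
    by_cases hcap : ∑ i, s i - ∑ j, d j ≤ s k - sl k
    · refine key (Function.update s k (s k - (∑ i, s i - ∑ j, d j))) d
        (fun i => ?_) (fun j => ⟨le_refl _, (hdb j).2⟩) ?_ ?_
      · by_cases hik : i = k
        · subst hik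
          rw [Function.update_self]
          constructor <;> linarith
        · rw [Function.update_of_ne hik]
          exact ⟨(hsb i).1, le_refl _⟩
      · exact Or.inl ⟨k, fun i hi => by
          rw [Function.update_of_ne hi]; exact hks i hi, hkd⟩
      · rw [sum_update_real]; ring
    · push_neg at hcap
      have hs₁b : ∀ i, sl i ≤ Function.update s k (sl k) i ∧
          Function.update s k (sl k) i ≤ su i := by
        intro i
        by_cases hik : i = k
        · subst hik
          rw [Function.update_self]
          exact ⟨le_refl _, hslsu i⟩
        · rw [Function.update_of_ne hik]
          exact hsb i
      have hs₁le : ∀ i, Function.update s k (sl k) i ≤ s i := by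
        intro i
        by_cases hik : i = k
        · subst hik; rw [Function.update_self]; exact (hsb i).1
        · rw [Function.update_of_ne hik]
      have hse₁ : ∀ i, Function.update s k (sl k) i = sl i ∨
          Function.update s k (sl k) i = su i := by
        intro i
        by_cases hik : i = k
        · subst hik; rw [Function.update_self]; exact Or.inl rfl
        · rw [Function.update_of_ne hik]; exact hks i hik
      have hfeas₁ : ∑ j, d j ≤ ∑ i, Function.update s k (sl k) i := by
        rw [sum_update_real]
        linarith
      obtain ⟨s₂, d₂, h1, h2, hQE₂, hbal₂⟩ :=
        balance_endpoints sl su dl du (Function.update s k (sl k)) d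
          hs₁b hdb hse₁ hkd hsl hdl hinfeas hfeas₁
      exact key s₂ d₂ (fun i => ⟨(h1 i).1, (h1 i).2.trans (hs₁le i)⟩) h2 hQE₂ hbal₂
  · -- free demand coordinate k, all supplies at endpoints
    by_cases hcap : ∑ i, s i - ∑ j, d j ≤ du k - d k
    · refine key s (Function.update d k (d k + (∑ i, s i - ∑ j, d j)))
        (fun i => ⟨(hsb i).1, le_refl _⟩) (fun j => ?_) ?_ ?_
      · by_cases hjk : j = k
        · subst hjk
          rw [Function.update_self]
          constructor <;> linarith
        · rw [Function.update_of_ne hjk]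
          exact ⟨le_refl _, (hdb j).2⟩
      · exact Or.inr ⟨k, fun j hj => by
          rw [Function.update_of_ne hj]; exact hkd j hj, hks⟩
      · rw [sum_update_real]; ring
    · push_neg at hcap
      have hd₁b : ∀ j, dl j ≤ Function.update d k (du k) j ∧
          Function.update d k (du k) j ≤ du j := by
        intro j
        by_cases hjk : j = k
        · subst hjk
          rw [Function.update_self]
          exact ⟨hdldu j, le_refl _⟩
        · rw [Function.update_of_ne hjk]
          exact hdb j
      have hd₁ge : ∀ j, d j ≤ Function.update d k (du k) j := by
        intro j
        by_cases hjk : j = k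
        · subst hjk; rw [Function.update_self]; exact (hdb j).2
        · rw [Function.update_of_ne hjk]
      have hde₁ : ∀ j, Function.update d k (du k) j = dl j ∨
          Function.update d k (du k) j = du j := by
        intro j
        by_cases hjk : j = k
        · subst hjk; rw [Function.update_self]; exact Or.inr rfl
        · rw [Function.update_of_ne hjk]; exact hkd j hjk
      have hfeas₁ : ∑ j, Function.update d k (du k) j ≤ ∑ i, s i := by
        rw [sum_update_real]
        linarith
      obtain ⟨s₂, d₂, h1, h2, hQE₂, hbal₂⟩ :=
        balance_endpoints sl su dl du s (Function.update d k (du k))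
          hsb hd₁b hks hde₁ hsl hdl hinfeas hfeas₁
      exact key s₂ d₂ h1 (fun j => ⟨(hd₁ge j).trans (h2 j).1, (h2 j).2⟩) hQE₂ hbal₂
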